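/- Let μ ∈ (0,1). For all x, y1, y2 ∈ [0,1] with y1 + y2 ≤ 1 and (x,y1,y2) such that x·y1 < 1 and x·y2 < 1, the function f(x,y1,y2) = 2μ² + (1-μ²)(1-x)(1-y1)/(1-x·y1) + (1-μ²)(1-x)(1-y2)/(1-x·y2) satisfies f(x,y1,y2) ≤ 2. -/
import Mathlib

theorem stmt4 (μ : ℝ) (hμ : μ ∈ Set.Ioo (0 : ℝ) 1)
    (x y1 y2 : ℝ) (hx : x ∈ Set.Icc (0 : ℝ) 1)
    (hy1 : y1 ∈ Set.Icc (0 : ℝ) 1) (hy2 : y2 ∈ Set.Icc (0 : ℝ) 1)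
    (hy : y1 + y2 ≤ 1) (hxy1 : x * y1 < 1) (hxy2 : x * y2 < 1) :
    2 * μ ^ 2 + (1 - μ ^ 2) * (1 - x) * (1 - y1) / (1 - x * y1)
      + (1 - μ ^ 2) * (1 - x) * (1 - y2) / (1 - x * y2) ≤ 2 := by
  obtain ⟨hμ0, hμ1⟩ := hμ
  obtain ⟨hx0, hx1⟩ := hx
  obtain ⟨h10, h11⟩ := hy1
  obtain ⟨h20, h21⟩ := hy2
  have hm : (0:ℝ) ≤ 1 - μ ^ 2 := by nlinarith
  have key : ∀ y : ℝ, 0 ≤ y → y ≤ 1 → x * y < 1 →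
      (1 - μ ^ 2) * (1 - x) * (1 - y) / (1 - x * y) ≤ 1 - μ ^ 2 := by
    intro y hy0 hy1' hxy
    rw [div_le_iff₀ (by linarith)]
    nlinarith [mul_nonneg hx0 hy0, mul_le_of_le_one_right hy0 hx1,
      mul_le_of_le_one_left hx0 hy1']
  have k1 := key y1 h10 h11 hxy1
  have k2 := key y2 h20 h21 hxy2
  linarith
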